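/- The number of strictly binary trees with 2m+1 internal nodes equals the m-th Catalan number c_m. -/

import Mathlib

/-- Binary rooted planar trees in which every internal node has exactly two
children. -/
inductive BTree where
  | leaf : BTree
  | node : BTree → BTree → BTree

/-- The size of a tree: its number of internal nodes. -/
def BTree.size : BTree → ℕ
  | .leaf => 0
  | .node l r => l.size + r.size + 1

/-- A tree is strictly binary if, after removing all leaves, every remaining
node has outdegree `0` or `2`; equivalently, at every internal node either both
children are leaves or both are internal. -/
def BTree.IsStrict : BTree → Prop
  | .leaf => True
  | .node l r => ((l = .leaf) ↔ (r = .leaf)) ∧ l.IsStrict ∧ r.IsStrict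

namespace BTree

/-- Doubling map: sends an arbitrary tree of size `m` to a strict tree of size
`2m+1`. -/
def S : BTree → BTree
  | .leaf => .node .leaf .leaf
  | .node l r => .node (S l) (S r)

lemma S_ne_leaf (t : BTree) : S t ≠ .leaf := by cases t <;> simp [S]

lemma S_size (t : BTree) : (S t).size = 2 * t.size + 1 := by
  induction t with
  | leaf => simp [S, size]
  | node l r hl hr => simp [S, size, hl, hr]; ring

lemma S_strict (t : BTree) : (S t).IsStrict := by
  induction t with
  | leaf => exact ⟨Iff.rfl, trivial, trivial⟩
  | node l r hl hr =>
    exact ⟨by simp [S_ne_leaf], hl, hr⟩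

lemma S_inj : ∀ a b : BTree, S a = S b → a = b := by
  intro a
  induction a with
  | leaf => intro b; cases b with
    | leaf => intro _; rfl
    | node l r =>
      intro h
      simp only [S, node.injEq] at h
      exact absurd h.1.symm (S_ne_leaf l)
  | node l r hl hr =>
    intro b; cases b with
    | leaf =>
      intro h
      simp only [S, node.injEq] at h
      exact absurd h.1 (S_ne_leaf l)
    | node l' r' =>
      intro h
      simp only [S, node.injEq] at h
      rw [hl _ h.1, hr _ h.2]

lemma S_surj : ∀ t : BTree, t.IsStrict → t ≠ .leaf → ∃ u, S u = t := by
  intro t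
  induction t with
  | leaf => intro _ h; exact absurd rfl h
  | node l r hl hr =>
    intro hs _
    obtain ⟨hiff, hsl, hsr⟩ := hs
    by_cases h : l = .leaf
    · subst h
      rw [hiff.mp rfl]
      exact ⟨.leaf, rfl⟩
    · obtain ⟨a, ha⟩ := hl hsl h
      obtain ⟨b, hb⟩ := hr hsr (fun hr' => h (hiff.mpr hr'))
      exact ⟨.node a b, by simp [S, ha, hb]⟩

/-- Conversion to Mathlib's `Tree Unit`. -/
def toT : BTree → Tree Unit
  | .leaf => .nil
  | .node l r => .node () (toT l) (toT r)

def ofT : Tree Unit → BTree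
  | .nil => .leaf
  | .node _ l r => .node (ofT l) (ofT r)

lemma toT_ofT : ∀ t, ofT (toT t) = t := by
  intro t; induction t with
  | leaf => rfl
  | node l r hl hr => simp [toT, ofT, hl, hr]

lemma ofT_toT : ∀ t, toT (ofT t) = t := by
  intro t; induction t with
  | nil => rfl
  | node _ l r hl hr => simp [toT, ofT, hl, hr]

lemma toT_numNodes : ∀ t : BTree, (toT t).numNodes = t.size := by
  intro t; induction t with
  | leaf => rfl
  | node l r hl hr => simp [toT, size, hl, hr]

end BTree

open BTree in
/-- The number of strictly binary trees with `2m+1` internal nodes is the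
`m`-th Catalan number. -/
theorem card_strictly_binary (m : ℕ) :
    Nat.card {t : BTree // t.size = 2 * m + 1 ∧ t.IsStrict} = catalan m := by
  have e1 : {t : BTree // t.size = m} ≃
      {t : BTree // t.size = 2 * m + 1 ∧ t.IsStrict} := by
    refine Equiv.ofBijective
      (fun u => ⟨S u.1, by rw [S_size, u.2], S_strict u.1⟩) ⟨?_, ?_⟩
    · rintro ⟨a, ha⟩ ⟨b, hb⟩ h
      simpa using S_inj a b (by simpa using congrArg Subtype.val h)
    · rintro ⟨t, ht, hs⟩
      obtain ⟨u, hu⟩ := S_surj t hs (by rintro rfl; simp [BTree.size] at ht)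
      refine ⟨⟨u, ?_⟩, by simpa using hu⟩
      have := S_size u
      rw [hu, ht] at this
      omega
  have e2 : {t : BTree // t.size = m} ≃ {t : Tree Unit // t.numNodes = m} := by
    refine ⟨fun u => ⟨toT u.1, by rw [toT_numNodes]; exact u.2⟩,
      fun u => ⟨ofT u.1, by rw [← toT_numNodes, ofT_toT]; exact u.2⟩, ?_, ?_⟩
    · rintro ⟨t, ht⟩; simp [toT_ofT]
    · rintro ⟨t, ht⟩; simp [ofT_toT]
  have e3 : {t : Tree Unit // t.numNodes = m} ≃
      {t : Tree Unit // t ∈ Tree.treesOfNumNodesEq m} :=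
    Equiv.subtypeEquivRight (fun t => by simp [BinaryTree.mem_treesOfNumNodesEq])
  rw [Nat.card_congr (e1.symm.trans (e2.trans e3)), Nat.card_eq_fintype_card,
    Fintype.card_coe, BinaryTree.treesOfNumNodesEq_card_eq_catalan]
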